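/- (Logical qubit count and infinite single-shot distance of the double homological product code, Theorem 4 parameter part.) Let δ ∈ M_{(n−k) × n}(F2) have full row rank n − k (so nullity(δ) = k and nullity(δᵀ) = 0). Define δ̃_{−1} := [1_n ⊗ δᵀ ; δ ⊗ 1_{n−k}], δ̃_0 := [δ ⊗ 1_n , 1_{n−k} ⊗ δᵀ], set ñ_{−1} := n(n−k), ñ_0 := n² + (n−k)², ñ_1 := (n−k)n, and define δ̆_{−1}, δ̆_0 as the block matrices of the double homological product: δ̆_{−1} := [[1_{ñ_{−1}} ⊗ δ̃_{−1}ᵀ , 0], [δ̃_{−1} ⊗ 1_{ñ_0} , 1_{ñ_0} ⊗ δ̃_0ᵀ], [0 , δ̃_0 ⊗ 1_{ñ_1}]], δ̆_0 := [[δ̃_{−1} ⊗ 1_{ñ_{−1}} , 1_{ñ_0} ⊗ δ̃_{−1}ᵀ , 0], [0 , δ̃_0 ⊗ 1_{ñ_0} , 1_{ñ_1} ⊗ δ̃_0ᵀ]], and δ̆_1 := [δ̃_0 ⊗ 1_{ñ_{−1}} , 1_{ñ_1} ⊗ δ̃_{−1}ᵀ]. Then the number of physical qubits is ñ_{−1}²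 + ñ_0² + ñ_1² = n⁴ + 4n²(n−k)² + (n−k)⁴; the number of logical qubits is nullity(δ̆_0) − rank(δ̆_{−1}) = k⁴; and nullity(δ̆_1) = rank(δ̆_0), i.e. every s with δ̆_1·s = 0 lies in the image of δ̆_0, so the single-shot distance d_ss is infinite. -/

import Mathlib

open Matrix
open scoped Kronecker

abbrev F2 := ZMod 2

/-- Hamming weight of a vector over `F2`. -/
def vwt {ι : Type*} [Fintype ι] (v : ι → F2) : ℕ :=
  (Finset.univ.filter fun i => v i ≠ 0).card

/-- Hamming weight of a matrix over `F2` (number of nonzero entries). -/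
def mwt {ι κ : Type*} [Fintype ι] [Fintype κ] (M : Matrix ι κ F2) : ℕ :=
  (Finset.univ.filter fun p : ι × κ => M p.1 p.2 ≠ 0).card

/-- Nullity of a matrix over `F2`: dimension of the kernel of the induced linear map. -/
noncomputable def nullity {ι κ : Type*} [Fintype ι] [Fintype κ] (M : Matrix ι κ F2) : ℕ :=
  Module.finrank F2 (LinearMap.ker M.mulVecLin)

/-- Index set of the level `−1` space of the hypergraph product. -/
abbrev Cm1 (n k : ℕ) := Fin n × Fin (n - k)
/-- Index set of the level `0` space of the hypergraph product. -/
abbrev C0 (n k : ℕ) := (Fin n × Fin n) ⊕ (Fin (n - k) × Fin (n - k))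
/-- Index set of the level `1` space of the hypergraph product. -/
abbrev C1 (n k : ℕ) := Fin (n - k) × Fin n


lemma F2_vec_add_self {ι : Type*} (v : ι → F2) : v + v = 0 :=
  funext fun _ => CharTwo.add_self_eq_zero _

lemma F2_mat_add_self {ι κ : Type*} (M : Matrix ι κ F2) : M + M = 0 := by
  ext i j; exact CharTwo.add_self_eq_zero _

lemma F2_eq_of_add_eq_zero {ι : Type*} {v w : ι → F2} (h : v + w = 0) : v = w := by
  have := congrArg (· + w) h
  simpa [add_assoc, F2_vec_add_self] using this

lemma sum_elim_eq_zero_iff {α β γ : Type*} [Zero γ] (a : α → γ) (b : β → γ) :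
    Sum.elim a b = 0 ↔ a = 0 ∧ b = 0 := by
  constructor
  · intro h
    exact ⟨funext fun x => congrFun h (Sum.inl x), funext fun x => congrFun h (Sum.inr x)⟩
  · rintro ⟨rfl, rfl⟩; ext (x|x) <;> rfl

lemma sum_elim_add {α β γ : Type*} [Add γ] (a c : α → γ) (b d : β → γ) :
    Sum.elim a b + Sum.elim c d = Sum.elim (a + c) (b + d) := by
  ext (x|x) <;> rfl

lemma rank_add_nullity {p q : Type*} [Fintype p] [Fintype q] (M : Matrix p q F2) :
    M.rank + nullity M = Fintype.card q := by
  have := LinearMap.finrank_range_add_finrank_ker M.mulVecLin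
  simpa [Matrix.rank, nullity, Module.finrank_fintype_fun_eq_card] using this

lemma exists_right_inverse {m n : Type*} [Fintype m] [Fintype n] [DecidableEq m] [DecidableEq n]
    (δ : Matrix m n F2) (h : δ.rank = Fintype.card m) : ∃ ε : Matrix n m F2, δ * ε = 1 := by
  have hr : LinearMap.range δ.mulVecLin = ⊤ := by
    apply Submodule.eq_top_of_finrank_eq
    rw [show Module.finrank F2 ↥(LinearMap.range δ.mulVecLin) = δ.rank from rfl, h,
      Module.finrank_fintype_fun_eq_card]
  obtain ⟨g, hg⟩ := δ.mulVecLin.exists_rightInverse_of_surjective hr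
  refine ⟨LinearMap.toMatrix' g, ?_⟩
  have h2 : (δ * LinearMap.toMatrix' g).mulVecLin = LinearMap.id := by
    rw [Matrix.mulVecLin_mul]
    rw [show (LinearMap.toMatrix' g).mulVecLin = Matrix.toLin' (LinearMap.toMatrix' g) from rfl,
      Matrix.toLin'_toMatrix']
    exact hg
  have h3 := congrArg LinearMap.toMatrix' h2
  rwa [show (δ * LinearMap.toMatrix' g).mulVecLin = Matrix.toLin' (δ * LinearMap.toMatrix' g)
    from rfl, LinearMap.toMatrix'_toLin', LinearMap.toMatrix'_id] at h3


/-- Theorem 4, parameter part: the double homological product of a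
full-row-rank classical parity check matrix has `n⁴ + 4n²(n−k)² + (n−k)⁴` physical qubits,
`k⁴` logical qubits, and infinite single-shot distance. -/
theorem double_product_parameters
    (n k : ℕ) (hk : k ≤ n)
    (δ : Matrix (Fin (n - k)) (Fin n) F2)
    (hrank : δ.rank = n - k)
    (tdm1 : Matrix (C0 n k) (Cm1 n k) F2)
    (htdm1 : tdm1 = Matrix.fromRows
      ((1 : Matrix (Fin n) (Fin n) F2) ⊗ₖ δᵀ)
      (δ ⊗ₖ (1 : Matrix (Fin (n - k)) (Fin (n - k)) F2)))
    (td0 : Matrix (C1 n k) (C0 n k) F2)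
    (htd0 : td0 = Matrix.fromCols
      (δ ⊗ₖ (1 : Matrix (Fin n) (Fin n) F2))
      ((1 : Matrix (Fin (n - k)) (Fin (n - k)) F2) ⊗ₖ δᵀ))
    (bdm1 : Matrix ((Cm1 n k × Cm1 n k) ⊕ ((C0 n k × C0 n k) ⊕ (C1 n k × C1 n k)))
      ((Cm1 n k × C0 n k) ⊕ (C0 n k × C1 n k)) F2)
    (hbdm1 : bdm1 = Matrix.fromBlocks
      ((1 : Matrix (Cm1 n k) (Cm1 n k) F2) ⊗ₖ tdm1ᵀ)
      0
      (Matrix.fromRows (tdm1 ⊗ₖ (1 : Matrix (C0 n k) (C0 n k) F2)) 0)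
      (Matrix.fromRows ((1 : Matrix (C0 n k) (C0 n k) F2) ⊗ₖ td0ᵀ)
        (td0 ⊗ₖ (1 : Matrix (C1 n k) (C1 n k) F2))))
    (bd0 : Matrix ((C0 n k × Cm1 n k) ⊕ (C1 n k × C0 n k))
      ((Cm1 n k × Cm1 n k) ⊕ ((C0 n k × C0 n k) ⊕ (C1 n k × C1 n k))) F2)
    (hbd0 : bd0 = Matrix.fromBlocks
      (tdm1 ⊗ₖ (1 : Matrix (Cm1 n k) (Cm1 n k) F2))
      (Matrix.fromCols ((1 : Matrix (C0 n k) (C0 n k) F2) ⊗ₖ tdm1ᵀ) 0)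
      0
      (Matrix.fromCols (td0 ⊗ₖ (1 : Matrix (C0 n k) (C0 n k) F2))
        ((1 : Matrix (C1 n k) (C1 n k) F2) ⊗ₖ td0ᵀ)))
    (bd1 : Matrix (C1 n k × Cm1 n k) ((C0 n k × Cm1 n k) ⊕ (C1 n k × C0 n k)) F2)
    (hbd1 : bd1 = Matrix.fromCols
      (td0 ⊗ₖ (1 : Matrix (Cm1 n k) (Cm1 n k) F2))
      ((1 : Matrix (C1 n k) (C1 n k) F2) ⊗ₖ tdm1ᵀ)) :
    -- number of physical qubits
    Fintype.card ((Cm1 n k × Cm1 n k) ⊕ ((C0 n k × C0 n k) ⊕ (C1 n k × C1 n k)))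
      = n^4 + 4 * n^2 * (n - k)^2 + (n - k)^4 ∧
    -- number of logical qubits
    (nullity bd0 : ℤ) - (bdm1.rank : ℤ) = (k : ℤ)^4 ∧
    -- infinite single-shot distance
    nullity bd1 = bd0.rank ∧
    (∀ s, bd1.mulVec s = 0 → ∃ r, bd0.mulVec r = s) := by
  -- a right inverse of δ
  obtain ⟨ε, hε⟩ : ∃ ε : Matrix (Fin n) (Fin (n - k)) F2, δ * ε = 1 :=
    exists_right_inverse δ (by rw [hrank, Fintype.card_fin])
  set G : Matrix (Cm1 n k) (C0 n k) F2 :=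
    Matrix.fromCols ((1 : Matrix (Fin n) (Fin n) F2) ⊗ₖ εᵀ) 0 with hG
  set H : Matrix (C0 n k) (C1 n k) F2 :=
    Matrix.fromRows (ε ⊗ₖ (1 : Matrix (Fin n) (Fin n) F2)) 0 with hH
  have hga : G * tdm1 = 1 := by
    rw [hG, htdm1, Matrix.fromCols_mul_fromRows, Matrix.zero_mul, add_zero,
      ← Matrix.mul_kronecker_mul, Matrix.one_mul, ← Matrix.transpose_mul, hε,
      Matrix.transpose_one, Matrix.one_kronecker_one]
  have hbh : td0 * H = 1 := by
    rw [hH, htd0, Matrix.fromCols_mul_fromRows, Matrix.mul_zero, add_zero,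
      ← Matrix.mul_kronecker_mul, Matrix.one_mul, hε, Matrix.one_kronecker_one]
  have hba : td0 * tdm1 = 0 := by
    rw [htd0, htdm1, Matrix.fromCols_mul_fromRows,
      ← Matrix.mul_kronecker_mul, ← Matrix.mul_kronecker_mul,
      Matrix.one_mul, Matrix.mul_one, Matrix.one_mul, Matrix.mul_one, F2_mat_add_self]
  have hat : tdm1ᵀ * td0ᵀ = 0 := by
    rw [← Matrix.transpose_mul, hba, Matrix.transpose_zero]
  -- part 4 : every element of ker bd1 is in the image of bd0
  have part4 : ∀ s, bd1 *ᵥ s = 0 → ∃ r, bd0 *ᵥ r = s := by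
    intro s hs
    rw [hbd1, ← Sum.elim_comp_inl_inr s, Matrix.fromCols_mulVec_sumElim] at hs
    have q1 : ((1 : Matrix (C0 n k) (C0 n k) F2) ⊗ₖ tdm1ᵀ) *
        ((1 : Matrix (C0 n k) (C0 n k) F2) ⊗ₖ Gᵀ) = 1 := by
      rw [← Matrix.mul_kronecker_mul, Matrix.one_mul, ← Matrix.transpose_mul, hga,
        Matrix.transpose_one, Matrix.one_kronecker_one]
    have q2 : ((1 : Matrix (C0 n k) (C0 n k) F2) ⊗ₖ tdm1ᵀ) * ((H * td0) ⊗ₖ Gᵀ)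
        = (H * td0) ⊗ₖ (1 : Matrix (Cm1 n k) (Cm1 n k) F2) := by
      rw [← Matrix.mul_kronecker_mul, Matrix.one_mul, ← Matrix.transpose_mul, hga,
        Matrix.transpose_one]
    have q2b : (H * td0) ⊗ₖ (1 : Matrix (Cm1 n k) (Cm1 n k) F2)
        = (H ⊗ₖ (1 : Matrix (Cm1 n k) (Cm1 n k) F2)) *
          (td0 ⊗ₖ (1 : Matrix (Cm1 n k) (Cm1 n k) F2)) := by
      rw [← Matrix.mul_kronecker_mul, Matrix.one_mul]
    have q3 : ((1 : Matrix (C0 n k) (C0 n k) F2) ⊗ₖ tdm1ᵀ) *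
        (H ⊗ₖ (1 : Matrix (C0 n k) (C0 n k) F2))
        = (H ⊗ₖ (1 : Matrix (Cm1 n k) (Cm1 n k) F2)) *
          ((1 : Matrix (C1 n k) (C1 n k) F2) ⊗ₖ tdm1ᵀ) := by
      simp only [← Matrix.mul_kronecker_mul, Matrix.one_mul, Matrix.mul_one]
    set r₁ : C0 n k × C0 n k → F2 :=
      ((1 : Matrix (C0 n k) (C0 n k) F2) ⊗ₖ Gᵀ) *ᵥ (s ∘ Sum.inl)
        + ((H * td0) ⊗ₖ Gᵀ) *ᵥ (s ∘ Sum.inl)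
        + (H ⊗ₖ (1 : Matrix (C0 n k) (C0 n k) F2)) *ᵥ (s ∘ Sum.inr) with hr₁
    have comp1 : ((1 : Matrix (C0 n k) (C0 n k) F2) ⊗ₖ tdm1ᵀ) *ᵥ r₁ = s ∘ Sum.inl := by
      rw [hr₁, Matrix.mulVec_add, Matrix.mulVec_add, Matrix.mulVec_mulVec,
        Matrix.mulVec_mulVec, Matrix.mulVec_mulVec, q1, q2, q2b, q3,
        Matrix.one_mulVec, ← Matrix.mulVec_mulVec, ← Matrix.mulVec_mulVec,
        add_assoc, ← Matrix.mulVec_add, hs, Matrix.mulVec_zero, add_zero]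
    have comp2 : (td0 ⊗ₖ (1 : Matrix (C0 n k) (C0 n k) F2)) *ᵥ r₁ = s ∘ Sum.inr := by
      have p1 : (td0 ⊗ₖ (1 : Matrix (C0 n k) (C0 n k) F2)) *
          ((1 : Matrix (C0 n k) (C0 n k) F2) ⊗ₖ Gᵀ) = td0 ⊗ₖ Gᵀ := by
        rw [← Matrix.mul_kronecker_mul, Matrix.one_mul, Matrix.mul_one]
      have p2 : (td0 ⊗ₖ (1 : Matrix (C0 n k) (C0 n k) F2)) * ((H * td0) ⊗ₖ Gᵀ)
          = td0 ⊗ₖ Gᵀ := by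
        rw [← Matrix.mul_kronecker_mul, ← Matrix.mul_assoc, hbh]
        simp only [Matrix.one_mul]
      have p3 : (td0 ⊗ₖ (1 : Matrix (C0 n k) (C0 n k) F2)) *
          (H ⊗ₖ (1 : Matrix (C0 n k) (C0 n k) F2)) = 1 := by
        rw [← Matrix.mul_kronecker_mul, hbh, Matrix.one_mul, Matrix.one_kronecker_one]
      rw [hr₁, Matrix.mulVec_add, Matrix.mulVec_add, Matrix.mulVec_mulVec,
        Matrix.mulVec_mulVec, Matrix.mulVec_mulVec, p1, p2, p3, Matrix.one_mulVec,
        F2_vec_add_self, zero_add]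
    refine ⟨Sum.elim 0 (Sum.elim r₁ 0), ?_⟩
    rw [hbd0, Matrix.fromBlocks_mulVec]
    simp only [Sum.elim_comp_inl, Sum.elim_comp_inr]
    rw [Matrix.mulVec_zero, zero_add, Matrix.zero_mulVec, zero_add,
      Matrix.fromCols_mulVec_sumElim, Matrix.fromCols_mulVec_sumElim,
      Matrix.zero_mulVec, add_zero, Matrix.mulVec_zero, add_zero, comp1, comp2]
    exact Sum.elim_comp_inl_inr s
  -- image of bd0 is contained in ker bd1
  have L1 : ∀ r, bd1 *ᵥ (bd0 *ᵥ r) = 0 := by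
    intro r
    have z1 : (td0 ⊗ₖ (1 : Matrix (Cm1 n k) (Cm1 n k) F2)) *
        (tdm1 ⊗ₖ (1 : Matrix (Cm1 n k) (Cm1 n k) F2)) = 0 := by
      rw [← Matrix.mul_kronecker_mul, hba, Matrix.zero_kronecker]
    have z2 : (td0 ⊗ₖ (1 : Matrix (Cm1 n k) (Cm1 n k) F2)) *
        ((1 : Matrix (C0 n k) (C0 n k) F2) ⊗ₖ tdm1ᵀ)
        = ((1 : Matrix (C1 n k) (C1 n k) F2) ⊗ₖ tdm1ᵀ) *
          (td0 ⊗ₖ (1 : Matrix (C0 n k) (C0 n k) F2)) := by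
      simp only [← Matrix.mul_kronecker_mul, Matrix.one_mul, Matrix.mul_one]
    have z3 : ((1 : Matrix (C1 n k) (C1 n k) F2) ⊗ₖ tdm1ᵀ) *
        ((1 : Matrix (C1 n k) (C1 n k) F2) ⊗ₖ td0ᵀ) = 0 := by
      rw [← Matrix.mul_kronecker_mul, hat, Matrix.kronecker_zero]
    rw [hbd0, hbd1, Matrix.fromBlocks_mulVec, Matrix.fromCols_mulVec_sumElim,
      ← Sum.elim_comp_inl_inr (r ∘ Sum.inr), Matrix.fromCols_mulVec_sumElim,
      Matrix.fromCols_mulVec_sumElim]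
    simp only [Matrix.zero_mulVec, Matrix.mulVec_add, Matrix.mulVec_mulVec,
      add_zero, zero_add, z1, z2, z3, Matrix.zero_mulVec]
    exact F2_vec_add_self _
  -- the auxiliary injection Φ whose image is ker bdm1
  set Φ : Matrix ((Cm1 n k × C0 n k) ⊕ (C0 n k × C1 n k)) (Cm1 n k × C1 n k) F2 :=
    Matrix.fromRows ((1 : Matrix (Cm1 n k) (Cm1 n k) F2) ⊗ₖ td0ᵀ)
      (tdm1 ⊗ₖ (1 : Matrix (C1 n k) (C1 n k) F2)) with hΦ
  have hL : (Matrix.fromCols (0 : Matrix (Cm1 n k × C1 n k) (Cm1 n k × C0 n k) F2)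
      (G ⊗ₖ (1 : Matrix (C1 n k) (C1 n k) F2))) * Φ = 1 := by
    rw [hΦ, Matrix.fromCols_mul_fromRows, Matrix.zero_mul, zero_add,
      ← Matrix.mul_kronecker_mul, hga, Matrix.one_mul, Matrix.one_kronecker_one]
  have hΦinj : ∀ v, Φ *ᵥ v = 0 → v = 0 := by
    intro v hv
    have h := congrArg
      (fun w => (Matrix.fromCols (0 : Matrix (Cm1 n k × C1 n k) (Cm1 n k × C0 n k) F2)
        (G ⊗ₖ (1 : Matrix (C1 n k) (C1 n k) F2))) *ᵥ w) hv
    simpa [Matrix.mulVec_mulVec, hL, Matrix.one_mulVec, Matrix.mulVec_zero] using h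
  -- ker bdm1 = range Φ
  have hkerm1 : LinearMap.ker bdm1.mulVecLin = LinearMap.range Φ.mulVecLin := by
    apply le_antisymm
    · intro u hu
      rw [LinearMap.mem_ker, Matrix.mulVecLin_apply] at hu
      rw [hbdm1, Matrix.fromBlocks_mulVec] at hu
      set u₁ := u ∘ Sum.inl with hu₁
      set u₂ := u ∘ Sum.inr with hu₂
      simp only [Matrix.fromRows_mulVec, Matrix.zero_mulVec, add_zero, sum_elim_add,
        zero_add] at hu
      rw [sum_elim_eq_zero_iff, sum_elim_eq_zero_iff] at hu
      obtain ⟨h1, h2, h3⟩ := hu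
      have h2' : (tdm1 ⊗ₖ (1 : Matrix (C0 n k) (C0 n k) F2)) *ᵥ u₁
          = ((1 : Matrix (C0 n k) (C0 n k) F2) ⊗ₖ td0ᵀ) *ᵥ u₂ := F2_eq_of_add_eq_zero h2
      have hu1 : u₁ = (G ⊗ₖ td0ᵀ) *ᵥ u₂ := by
        have e1 : (G ⊗ₖ (1 : Matrix (C0 n k) (C0 n k) F2)) *ᵥ
            ((tdm1 ⊗ₖ (1 : Matrix (C0 n k) (C0 n k) F2)) *ᵥ u₁) = u₁ := by
          rw [Matrix.mulVec_mulVec, ← Matrix.mul_kronecker_mul, hga, Matrix.one_mul,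
            Matrix.one_kronecker_one, Matrix.one_mulVec]
        rw [← e1, h2', Matrix.mulVec_mulVec, ← Matrix.mul_kronecker_mul,
          Matrix.mul_one, Matrix.one_mul]
      have w1 : ((1 : Matrix (Cm1 n k) (Cm1 n k) F2) ⊗ₖ td0ᵀ) *
          ((1 : Matrix (Cm1 n k) (Cm1 n k) F2) ⊗ₖ Hᵀ) * (G ⊗ₖ td0ᵀ) = G ⊗ₖ td0ᵀ := by
        rw [← Matrix.mul_kronecker_mul, Matrix.one_mul, ← Matrix.mul_kronecker_mul,
          Matrix.one_mul]
        rw [← Matrix.transpose_mul, ← Matrix.transpose_mul, ← Matrix.mul_assoc, hbh,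
          Matrix.one_mul]
      have compA : ((1 : Matrix (Cm1 n k) (Cm1 n k) F2) ⊗ₖ td0ᵀ) *ᵥ
          (((1 : Matrix (Cm1 n k) (Cm1 n k) F2) ⊗ₖ Hᵀ) *ᵥ u₁) = u₁ := by
        rw [hu1, Matrix.mulVec_mulVec, Matrix.mulVec_mulVec, w1]
      have compB : (tdm1 ⊗ₖ (1 : Matrix (C1 n k) (C1 n k) F2)) *ᵥ
          (((1 : Matrix (Cm1 n k) (Cm1 n k) F2) ⊗ₖ Hᵀ) *ᵥ u₁) = u₂ := by
        have w2 : (tdm1 ⊗ₖ (1 : Matrix (C1 n k) (C1 n k) F2)) *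
            ((1 : Matrix (Cm1 n k) (Cm1 n k) F2) ⊗ₖ Hᵀ)
            = ((1 : Matrix (C0 n k) (C0 n k) F2) ⊗ₖ Hᵀ) *
              (tdm1 ⊗ₖ (1 : Matrix (C0 n k) (C0 n k) F2)) := by
          simp only [← Matrix.mul_kronecker_mul, Matrix.one_mul, Matrix.mul_one]
        have w3 : ((1 : Matrix (C0 n k) (C0 n k) F2) ⊗ₖ Hᵀ) *
            ((1 : Matrix (C0 n k) (C0 n k) F2) ⊗ₖ td0ᵀ) = 1 := by
          rw [← Matrix.mul_kronecker_mul, Matrix.one_mul, ← Matrix.transpose_mul, hbh,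
            Matrix.transpose_one, Matrix.one_kronecker_one]
        rw [Matrix.mulVec_mulVec, w2, ← Matrix.mulVec_mulVec, h2',
          Matrix.mulVec_mulVec, w3, Matrix.one_mulVec]
      refine ⟨((1 : Matrix (Cm1 n k) (Cm1 n k) F2) ⊗ₖ Hᵀ) *ᵥ u₁, ?_⟩
      rw [Matrix.mulVecLin_apply, hΦ, Matrix.fromRows_mulVec, compA, compB]
      exact Sum.elim_comp_inl_inr u
    · rintro u ⟨t, rfl⟩
      rw [LinearMap.mem_ker]
      simp only [Matrix.mulVecLin_apply]
      have z1 : ((1 : Matrix (Cm1 n k) (Cm1 n k) F2) ⊗ₖ tdm1ᵀ) *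
          ((1 : Matrix (Cm1 n k) (Cm1 n k) F2) ⊗ₖ td0ᵀ) = 0 := by
        rw [← Matrix.mul_kronecker_mul, hat, Matrix.kronecker_zero]
      have z2 : (tdm1 ⊗ₖ (1 : Matrix (C0 n k) (C0 n k) F2)) *
          ((1 : Matrix (Cm1 n k) (Cm1 n k) F2) ⊗ₖ td0ᵀ)
          = ((1 : Matrix (C0 n k) (C0 n k) F2) ⊗ₖ td0ᵀ) *
            (tdm1 ⊗ₖ (1 : Matrix (C1 n k) (C1 n k) F2)) := by
        simp only [← Matrix.mul_kronecker_mul, Matrix.one_mul, Matrix.mul_one]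
      have z3 : (td0 ⊗ₖ (1 : Matrix (C1 n k) (C1 n k) F2)) *
          (tdm1 ⊗ₖ (1 : Matrix (C1 n k) (C1 n k) F2)) = 0 := by
        rw [← Matrix.mul_kronecker_mul, hba, Matrix.zero_kronecker]
      rw [hbdm1, hΦ, Matrix.fromRows_mulVec, Matrix.fromBlocks_mulVec]
      simp only [Sum.elim_comp_inl, Sum.elim_comp_inr]
      simp only [Matrix.fromRows_mulVec, Matrix.zero_mulVec, add_zero, sum_elim_add,
        zero_add]
      simp only [Matrix.mulVec_mulVec, z1, z2, z3, Matrix.zero_mulVec]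
      simp only [F2_vec_add_self]
      ext (x|x|x) <;> rfl
  -- ker bd1 = range bd0
  have hker1 : LinearMap.ker bd1.mulVecLin = LinearMap.range bd0.mulVecLin := by
    apply le_antisymm
    · intro s hs
      rw [LinearMap.mem_ker, Matrix.mulVecLin_apply] at hs
      obtain ⟨r, hr⟩ := part4 s hs
      exact ⟨r, by rw [Matrix.mulVecLin_apply, hr]⟩
    · rintro s ⟨r, rfl⟩
      rw [LinearMap.mem_ker]
      simp only [Matrix.mulVecLin_apply]
      exact L1 r
  have part3 : nullity bd1 = bd0.rank := by
    rw [nullity, hker1, Matrix.rank]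
  -- bd1 is surjective
  have hK : bd1 * Matrix.fromRows (H ⊗ₖ (1 : Matrix (Cm1 n k) (Cm1 n k) F2))
      (0 : Matrix (C1 n k × C0 n k) (C1 n k × Cm1 n k) F2) = 1 := by
    rw [hbd1, Matrix.fromCols_mul_fromRows, Matrix.mul_zero, add_zero,
      ← Matrix.mul_kronecker_mul, hbh, Matrix.one_mul, Matrix.one_kronecker_one]
  have hsurj : Function.Surjective bd1.mulVecLin := by
    intro y
    refine ⟨Matrix.fromRows (H ⊗ₖ (1 : Matrix (Cm1 n k) (Cm1 n k) F2))
      (0 : Matrix (C1 n k × C0 n k) (C1 n k × Cm1 n k) F2) *ᵥ y, ?_⟩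
    rw [Matrix.mulVecLin_apply, Matrix.mulVec_mulVec, hK, Matrix.one_mulVec]
  have r1card : bd1.rank = Fintype.card (C1 n k × Cm1 n k) := by
    rw [Matrix.rank, LinearMap.range_eq_top.mpr hsurj, finrank_top,
      Module.finrank_fintype_fun_eq_card]
  have nm1card : nullity bdm1 = Fintype.card (Cm1 n k × C1 n k) := by
    have h1 := rank_add_nullity Φ
    have h0 : nullity Φ = 0 := by
      rw [nullity, Matrix.ker_mulVecLin_eq_bot_iff.mpr hΦinj, finrank_bot]
    rw [nullity, hkerm1,
      show Module.finrank F2 ↥(LinearMap.range Φ.mulVecLin) = Φ.rank from rfl]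
    omega
  refine ⟨?_, ?_, part3, part4⟩
  · simp only [Fintype.card_sum, Fintype.card_prod, Fintype.card_fin]
    generalize n - k = m
    ring
  · have E0 := rank_add_nullity bd0
    have E1 := rank_add_nullity bd1
    have Em := rank_add_nullity bdm1
    simp only [Fintype.card_sum, Fintype.card_prod, Fintype.card_fin] at E0 E1 Em r1card nm1card
    have hnk : ((n - k : ℕ) : ℤ) = (n : ℤ) - (k : ℤ) := by
      push_cast [Nat.cast_sub hk]; ring
    zify at E0 E1 Em r1card nm1card part3
    rw [hnk] at E0 E1 Em r1card nm1card
    linear_combination E0 - E1 - Em + part3 + r1card + nm1card
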